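/- Let r be a positive integer and let g = (g₁,g₂) ∈ 𝒪(ℂ²,0,0) with Dg(0) = diag(λ₁,λ₂) such that, for j = 1, 2 and all pairs (i₁,i₂) of nonnegative integers with 2 ≤ i₁ + i₂ ≤ r, the coefficient of x₁^{i₁}x₂^{i₂} in the power series of g_j is nonzero only if λ_j = λ₁^{i₁}λ₂^{i₂}. Then for every positive integer k, the k-th iterate g^k = (g₁^{(k)}, g₂^{(k)}) has the same property: for j = 1, 2 its power series is λ_j^k x_j plus terms of degree ≥ 2, and for all (i₁,i₂) with 2 ≤ i₁ + i₂ ≤ r the coefficient of x₁^{i₁}x₂^{i₂} in g_j^{(k)} is nonzero only if λ_j = λ₁^{i₁}λ₂^{i₂}. -/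

import Mathlib

open Metric Set Filter Topology Polynomial Asymptotics
open scoped Classical

noncomputable section

namespace ZhangPaper

/-- `ℂⁿ`. -/
abbrev Cn (n : ℕ) := Fin n → ℂ

variable {n : ℕ}

/-- A germ in `𝒪(ℂⁿ,0,0)`: holomorphic near `0` and fixing the origin. -/
def IsGerm (f : Cn n → Cn n) : Prop := AnalyticAt ℂ f 0 ∧ f 0 = 0

/-- `q` is a regular value of `h` on `s`. -/
def IsRegularValueOn (h : Cn n → Cn n) (s : Set (Cn n)) (q : Cn n) : Prop :=
  ∀ x ∈ s, h x = q → Function.Bijective (fderiv ℂ h x)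

/-- `m` is the zero order (multiplicity) of `h` at the isolated zero `p`:
the number of solutions of `h x = q` near `p`, for any regular value `q`
with `‖q‖` sufficiently small. -/
def HasZeroOrder (h : Cn n → Cn n) (p : Cn n) (m : ℕ) : Prop :=
  ∃ r > 0, AnalyticOnNhd ℂ h (closedBall p r) ∧ h p = 0 ∧
    (∀ x ∈ closedBall p r, h x = 0 → x = p) ∧
    (∀ ε > 0, ∃ q : Cn n, ‖q‖ < ε ∧ IsRegularValueOn h (ball p r) q) ∧
    ∃ δ > 0, ∀ q : Cn n, ‖q‖ < δ → IsRegularValueOn h (ball p r) q →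
      {x ∈ ball p r | h x = q}.ncard = m

/-- The zero order `π_h(p)` of `h` at `p`. -/
def zeroOrder (h : Cn n → Cn n) (p : Cn n) : ℕ := sInf {m | HasZeroOrder h p m}

/-- The fixed point index `μ_g(p)` of `g` at `p`. -/
def fixedPointIndex (g : Cn n → Cn n) (p : Cn n) : ℕ :=
  zeroOrder (fun x => x - g x) p

/-- The local Dold index `P_M(f,0)`. -/
def doldIndex (f : Cn n → Cn n) (M : ℕ) : ℤ :=
  ∑ τ ∈ M.primeFactors.powerset,
    (-1 : ℤ) ^ τ.card * (fixedPointIndex (f^[M / (∏ p ∈ τ, p)]) 0 : ℤ)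

/-- `x` is a periodic point of exact period `M` for `g`. -/
def ExactPeriodicPt (g : Cn n → Cn n) (M : ℕ) (x : Cn n) : Prop :=
  g^[M] x = x ∧ ∀ j, 0 < j → j < M → g^[j] x ≠ x

/-- `g` has at least `m` distinct periodic orbits of period `M` inside `B`. -/
def AtLeastOrbits (g : Cn n → Cn n) (M m : ℕ) (B : Set (Cn n)) : Prop :=
  ∃ p : Fin m → Cn n,
    (∀ i, ExactPeriodicPt g M (p i) ∧ ∀ j < M, g^[j] (p i) ∈ B) ∧
    ∀ i j : Fin m, i ≠ j → ∀ l < M, g^[l] (p i) ≠ p j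

/-- `g` has exactly `m` distinct periodic orbits of period `M` inside `B`. -/
def ExactlyOrbits (g : Cn n → Cn n) (M m : ℕ) (B : Set (Cn n)) : Prop :=
  AtLeastOrbits g M m B ∧ ¬ AtLeastOrbits g M (m + 1) B

/-- The number `𝒪_M(f,0)` of periodic orbits of period `M` of `f` hidden at the
fixed point `0`: the largest `m` such that there is a ball `B` centered at `0` in which
`0` is the only fixed point of `f^M`, and a sequence of holomorphic maps fixing `0`
converging to `f` uniformly on `B`, each having `m` distinct periodic orbits of
period `M` in `B`. -/
def hiddenOrbits (f : Cn n → Cn n) (M : ℕ) : ℕ :=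
  sSup {m | ∃ r > 0,
    (∀ x ∈ closedBall (0 : Cn n) r, f^[M] x = x → x = 0) ∧
    ∃ fk : ℕ → Cn n → Cn n,
      (∀ k, AnalyticOnNhd ℂ (fk k) (ball (0 : Cn n) r) ∧ fk k 0 = 0) ∧
      TendstoUniformlyOn fk f atTop (ball (0 : Cn n) r) ∧
      ∀ k, AtLeastOrbits (fk k) M m (ball (0 : Cn n) r)}

/-- `0` is an isolated fixed point of `g`. -/
def IsolatedFixedPtAt0 (g : Cn n → Cn n) : Prop :=
  g 0 = 0 ∧ ∀ᶠ x in 𝓝[≠] (0 : Cn n), g x ≠ x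

/-- `0` is an isolated zero of `h`. -/
def IsolatedZeroAt0 (h : Cn n → Cn n) : Prop :=
  h 0 = 0 ∧ ∀ᶠ x in 𝓝[≠] (0 : Cn n), h x ≠ 0

/-- `p` is a simple fixed point of `g`: `Dg(p)` has no eigenvalue `1`. -/
def SimpleFixedPt (g : Cn n → Cn n) (p : Cn n) : Prop :=
  g p = p ∧ ¬ Module.End.HasEigenvalue ((fderiv ℂ g p).toLinearMap) 1

/-- The global fixed point index `L(g)` of `g` over `U`: the sum of the fixed point
indices at all fixed points of `g` in `U`. -/
def globalIndex (g : Cn n → Cn n) (U : Set (Cn n)) : ℤ :=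
  ∑ᶠ p ∈ {x ∈ U | g x = x}, (fixedPointIndex g p : ℤ)

/-- The global Dold index `P_M(f)` over `U`. -/
def globalDold (f : Cn n → Cn n) (M : ℕ) (U : Set (Cn n)) : ℤ :=
  ∑ τ ∈ M.primeFactors.powerset,
    (-1 : ℤ) ^ τ.card * globalIndex (f^[M / (∏ p ∈ τ, p)]) U

/-- `h : ℂ² → ℂ` has an expansion `lin · x_j` plus resonant terms of degrees `2,…,r`
(the coefficient of `x₁^{i₁} x₂^{i₂}` can be nonzero only if
`target = λ₁^{i₁} λ₂^{i₂}`) plus a remainder `o(|x|^r)`. -/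
def ResonantUpTo (l₁ l₂ target lin : ℂ) (j : Fin 2) (h : Cn 2 → ℂ) (r : ℕ) : Prop :=
  ∃ c : ℕ → ℕ → ℂ,
    (∀ i₁ i₂ : ℕ, 2 ≤ i₁ + i₂ → i₁ + i₂ ≤ r → c i₁ i₂ ≠ 0 →
      target = l₁ ^ i₁ * l₂ ^ i₂) ∧
    (fun x : Cn 2 => h x - lin * x j -
        ∑ i ∈ Finset.range (r + 1) ×ˢ Finset.range (r + 1),
          (if 2 ≤ i.1 + i.2 ∧ i.1 + i.2 ≤ r then c i.1 i.2 * x 0 ^ i.1 * x 1 ^ i.2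
            else 0))
      =o[𝓝 (0 : Cn 2)] fun x : Cn 2 => ‖x‖ ^ r

open MvPolynomial

/-! ### Auxiliary polynomial machinery -/

/-- degree of an exponent vector -/
def deg (d : Fin 2 →₀ ℕ) : ℕ := d 0 + d 1

/-- multiplicative character -/
def χ (l₁ l₂ : ℂ) (d : Fin 2 →₀ ℕ) : ℂ := l₁ ^ (d 0) * l₂ ^ (d 1)

/-- exponent vector of a single variable -/
def ee (j : Fin 2) : Fin 2 →₀ ℕ := Finsupp.single j 1

/-- exponent vector `(a, b)` -/
def mon (a b : ℕ) : Fin 2 →₀ ℕ := Finsupp.single 0 a + Finsupp.single 1 b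

lemma mon_apply0 (a b : ℕ) : mon a b 0 = a := by
  simp [mon, Finsupp.single_apply]

lemma mon_apply1 (a b : ℕ) : mon a b 1 = b := by
  simp [mon, Finsupp.single_apply]

lemma mon_eq_self (d : Fin 2 →₀ ℕ) : mon (d 0) (d 1) = d := by
  ext i
  revert i; rw [Fin.forall_fin_two]
  exact ⟨mon_apply0 _ _, mon_apply1 _ _⟩

lemma mon_inj {a b a' b' : ℕ} (h : mon a b = mon a' b') : a = a' ∧ b = b' := by
  constructor
  · have := congrArg (fun d : Fin 2 →₀ ℕ => d 0) h
    simpa [mon_apply0] using this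
  · have := congrArg (fun d : Fin 2 →₀ ℕ => d 1) h
    simpa [mon_apply1] using this

lemma deg_mon (a b : ℕ) : deg (mon a b) = a + b := by
  simp [deg, mon_apply0, mon_apply1]

lemma deg_add (d e : Fin 2 →₀ ℕ) : deg (d + e) = deg d + deg e := by
  simp [deg, Finsupp.add_apply]; ring

lemma χ_add (l₁ l₂ : ℂ) (d e : Fin 2 →₀ ℕ) :
    χ l₁ l₂ (d + e) = χ l₁ l₂ d * χ l₁ l₂ e := by
  simp [χ, Finsupp.add_apply, pow_add]; ring

lemma ee_zero : ee (0 : Fin 2) = mon 1 0 := by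
  simp [ee, mon]

lemma ee_one : ee (1 : Fin 2) = mon 0 1 := by
  simp [ee, mon]

lemma deg_ee (j : Fin 2) : deg (ee j) = 1 := by
  revert j; rw [Fin.forall_fin_two]
  constructor <;> simp [ee_zero, ee_one, deg_mon]

lemma χ_ee_zero (l₁ l₂ : ℂ) : χ l₁ l₂ (ee 0) = l₁ := by
  simp [ee_zero, χ, mon_apply0, mon_apply1]

lemma χ_ee_one (l₁ l₂ : ℂ) : χ l₁ l₂ (ee 1) = l₂ := by
  simp [ee_one, χ, mon_apply0, mon_apply1]

lemma ee_inj {i j : Fin 2} (h : ee i = ee j) : i = j :=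
  Finsupp.single_left_injective (one_ne_zero) h

lemma deg_eq_zero {d : Fin 2 →₀ ℕ} (h : deg d = 0) : d = 0 := by
  rw [deg, Nat.add_eq_zero] at h
  ext i; revert i; rw [Fin.forall_fin_two]
  simpa using h

lemma deg_eq_one {d : Fin 2 →₀ ℕ} (h : deg d = 1) : d = ee 0 ∨ d = ee 1 := by
  rw [deg] at h
  rcases Nat.add_eq_one_iff.mp h with ⟨h0, h1⟩ | ⟨h0, h1⟩
  · right
    rw [← mon_eq_self d, h0, h1, ee_one]
  · left
    rw [← mon_eq_self d, h0, h1, ee_zero]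

/-- `p` is `t`-resonant with all monomials of degree at least `m`. -/
def Good (l₁ l₂ t : ℂ) (m : ℕ) (p : MvPolynomial (Fin 2) ℂ) : Prop :=
  ∀ d : Fin 2 →₀ ℕ, coeff d p ≠ 0 → t = χ l₁ l₂ d ∧ m ≤ deg d

lemma Good.mono {l₁ l₂ t : ℂ} {m m' : ℕ} {p : MvPolynomial (Fin 2) ℂ}
    (h : Good l₁ l₂ t m p) (hm : m' ≤ m) : Good l₁ l₂ t m' p :=
  fun d hd => ⟨(h d hd).1, hm.trans (h d hd).2⟩

lemma Good.zero (l₁ l₂ t : ℂ) (m : ℕ) : Good l₁ l₂ t m (0 : MvPolynomial (Fin 2) ℂ) := by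
  intro d hd; simp at hd

lemma Good.add {l₁ l₂ t : ℂ} {m : ℕ} {p q : MvPolynomial (Fin 2) ℂ}
    (hp : Good l₁ l₂ t m p) (hq : Good l₁ l₂ t m q) : Good l₁ l₂ t m (p + q) := by
  intro d hd
  rw [MvPolynomial.coeff_add] at hd
  by_cases h : coeff d p = 0
  · exact hq d (by simpa [h] using hd)
  · exact hp d h

lemma Good.mul {l₁ l₂ t t' : ℂ} {m m' : ℕ} {p q : MvPolynomial (Fin 2) ℂ}
    (hp : Good l₁ l₂ t m p) (hq : Good l₁ l₂ t' m' q) :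
    Good l₁ l₂ (t * t') (m + m') (p * q) := by
  intro d hd
  rw [MvPolynomial.coeff_mul] at hd
  obtain ⟨x, hx, hne⟩ := Finset.exists_ne_zero_of_sum_ne_zero hd
  have hxd : x.1 + x.2 = d := Finset.HasAntidiagonal.mem_antidiagonal.mp hx
  have h1 : coeff x.1 p ≠ 0 := fun h => hne (by simp [h])
  have h2 : coeff x.2 q ≠ 0 := fun h => hne (by simp [h])
  obtain ⟨ht1, hm1⟩ := hp x.1 h1
  obtain ⟨ht2, hm2⟩ := hq x.2 h2
  constructor
  · rw [← hxd, χ_add, ← ht1, ← ht2]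
  · rw [← hxd, deg_add]; exact Nat.add_le_add hm1 hm2

lemma Good.pow {l₁ l₂ t : ℂ} {m : ℕ} {p : MvPolynomial (Fin 2) ℂ}
    (hp : Good l₁ l₂ t m p) (n : ℕ) : Good l₁ l₂ (t ^ n) (n * m) (p ^ n) := by
  induction n with
  | zero =>
    intro d hd
    rw [pow_zero, MvPolynomial.coeff_one] at hd
    have : d = 0 := by by_contra h; simp [Ne.symm h] at hd
    subst this
    simp [χ, deg]
  | succ n ih =>
    rw [pow_succ, pow_succ, Nat.succ_mul]
    exact ih.mul hp

lemma Good.monomial {l₁ l₂ t : ℂ} {m : ℕ} (d : Fin 2 →₀ ℕ) (c : ℂ)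
    (ht : t = χ l₁ l₂ d) (hm : m ≤ deg d) :
    Good l₁ l₂ t m (MvPolynomial.monomial d c) := by
  intro e he
  rw [MvPolynomial.coeff_monomial] at he
  by_cases h : d = e
  · subst h; exact ⟨ht, hm⟩
  · simp [h] at he

lemma Good.sum {l₁ l₂ t : ℂ} {m : ℕ} {ι : Type*} (s : Finset ι)
    (f : ι → MvPolynomial (Fin 2) ℂ) (h : ∀ i ∈ s, Good l₁ l₂ t m (f i)) :
    Good l₁ l₂ t m (∑ i ∈ s, f i) := by
  classical
  induction s using Finset.induction_on with
  | empty => simpa using Good.zero l₁ l₂ t m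
  | insert _ _ hni ih =>
    rename_i a s'
    rw [Finset.sum_insert hni]
    exact (h a (Finset.mem_insert_self a s')).add
      (ih fun i hi => h i (Finset.mem_insert_of_mem hi))

lemma Good.sub {l₁ l₂ t : ℂ} {m : ℕ} {p q : MvPolynomial (Fin 2) ℂ}
    (hp : Good l₁ l₂ t m p) (hq : Good l₁ l₂ t m q) : Good l₁ l₂ t m (p - q) := by
  intro d hd
  rw [MvPolynomial.coeff_sub] at hd
  by_cases h : coeff d p = 0
  · exact hq d (by intro h2; rw [h, h2] at hd; simp at hd)
  · exact hp d h


lemma prod_support_eq (f : Fin 2 → MvPolynomial (Fin 2) ℂ) (d : Fin 2 →₀ ℕ) :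
    ∏ i ∈ d.support, f i ^ d i = f 0 ^ d 0 * f 1 ^ d 1 := by
  rw [← Fin.prod_univ_two (fun i => f i ^ d i)]
  apply Finset.prod_subset (Finset.subset_univ _)
  intro i _ hi
  rw [Finsupp.notMem_support_iff] at hi
  simp [hi]

lemma Good.bind₁ {l₁ l₂ t : ℂ} {m : ℕ} {q p₀ p₁ : MvPolynomial (Fin 2) ℂ}
    (hq : Good l₁ l₂ t m q)
    (h0 : Good l₁ l₂ l₁ 1 p₀) (h1 : Good l₁ l₂ l₂ 1 p₁) :
    Good l₁ l₂ t m (MvPolynomial.bind₁ ![p₀, p₁] q) := by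
  conv in MvPolynomial.bind₁ _ q => rw [q.as_sum]
  rw [map_sum]
  apply Good.sum
  intro d hd
  have hc : MvPolynomial.coeff d q ≠ 0 := MvPolynomial.mem_support_iff.mp hd
  obtain ⟨ht, hm⟩ := hq d hc
  rw [MvPolynomial.bind₁_monomial, prod_support_eq]
  have e0 : (![p₀, p₁] : Fin 2 → MvPolynomial (Fin 2) ℂ) 0 = p₀ := rfl
  have e1 : (![p₀, p₁] : Fin 2 → MvPolynomial (Fin 2) ℂ) 1 = p₁ := rfl
  rw [e0, e1]
  have g0 := h0.pow (d 0)
  have g1 := h1.pow (d 1)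
  have gc : Good l₁ l₂ 1 0 (MvPolynomial.C (MvPolynomial.coeff d q) : MvPolynomial (Fin 2) ℂ) := by
    intro e he
    rw [← MvPolynomial.monomial_zero'] at he
    rw [MvPolynomial.coeff_monomial] at he
    by_cases h : (0 : Fin 2 →₀ ℕ) = e
    · subst h; simp [χ, deg]
    · simp [h] at he
  have := (gc.mul g0).mul g1
  have heq : (1 : ℂ) * l₁ ^ (d 0) * l₂ ^ (d 1) = t := by rw [ht]; simp [χ]
  rw [heq] at this
  have hdeg : m ≤ 0 + d 0 * 1 + d 1 * 1 := by
    simpa [deg] using hm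
  rw [mul_assoc] at this
  exact this.mono hdeg


/-! ### Asymptotic lemmas -/

lemma eventually_norm_le (c : ℝ) (hc : 0 < c) :
    ∀ᶠ x : Cn 2 in 𝓝 0, ‖x‖ ≤ c := by
  filter_upwards [Metric.closedBall_mem_nhds (0 : Cn 2) hc] with x hx
  exact mem_closedBall_zero_iff.mp hx

/-- `‖x‖^b = O(‖x‖^a)` near `0` when `a ≤ b`. -/
lemma normpow_isBigO {a b : ℕ} (h : a ≤ b) :
    (fun x : Cn 2 => ‖x‖ ^ b) =O[𝓝 0] fun x : Cn 2 => ‖x‖ ^ a := by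
  apply IsBigO.of_bound 1
  filter_upwards [eventually_norm_le 1 one_pos] with x hx
  have h1 : ‖x‖ ^ b ≤ ‖x‖ ^ a := pow_le_pow_of_le_one (norm_nonneg x) hx h
  have h2 : (0:ℝ) ≤ ‖x‖ ^ b := pow_nonneg (norm_nonneg x) b
  have h3 : (0:ℝ) ≤ ‖x‖ ^ a := pow_nonneg (norm_nonneg x) a
  rw [Real.norm_of_nonneg h2, Real.norm_of_nonneg h3]
  simpa using h1

/-- `‖x‖^(r+1) = o(‖x‖^r)` near `0`. -/
lemma normpow_isLittleO (r : ℕ) :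
    (fun x : Cn 2 => ‖x‖ ^ (r + 1)) =o[𝓝 0] fun x : Cn 2 => ‖x‖ ^ r := by
  rw [isLittleO_iff]
  intro c hc
  filter_upwards [eventually_norm_le c hc] with x hx
  have h2 : (0:ℝ) ≤ ‖x‖ ^ (r+1) := pow_nonneg (norm_nonneg x) _
  have h3 : (0:ℝ) ≤ ‖x‖ ^ r := pow_nonneg (norm_nonneg x) _
  rw [Real.norm_of_nonneg h2, Real.norm_of_nonneg h3, pow_succ]
  calc ‖x‖ ^ r * ‖x‖ ≤ ‖x‖ ^ r * c :=
        mul_le_mul_of_nonneg_left hx (pow_nonneg (norm_nonneg x) r)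
    _ = c * ‖x‖ ^ r := mul_comm _ _

/-- monomial big-O bound -/
lemma monomial_isBigO {m a b : ℕ} (h : m ≤ a + b) :
    (fun x : Cn 2 => x 0 ^ a * x 1 ^ b) =O[𝓝 0] fun x : Cn 2 => ‖x‖ ^ m := by
  apply IsBigO.of_bound 1
  filter_upwards [eventually_norm_le 1 one_pos] with x hx
  have h0 : ‖x 0‖ ≤ ‖x‖ := norm_le_pi_norm x 0
  have h1 : ‖x 1‖ ≤ ‖x‖ := norm_le_pi_norm x 1
  have key : ‖x 0 ^ a * x 1 ^ b‖ ≤ ‖x‖ ^ (a + b) := by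
    rw [norm_mul, norm_pow, norm_pow, pow_add]
    exact mul_le_mul (pow_le_pow_left₀ (norm_nonneg _) h0 a)
      (pow_le_pow_left₀ (norm_nonneg _) h1 b) (pow_nonneg (norm_nonneg _) _)
      (pow_nonneg (norm_nonneg _) _)
  have key2 : ‖x‖ ^ (a+b) ≤ ‖x‖ ^ m := pow_le_pow_of_le_one (norm_nonneg x) hx h
  have h3 : (0:ℝ) ≤ ‖x‖ ^ m := pow_nonneg (norm_nonneg x) _
  rw [Real.norm_of_nonneg h3, one_mul]
  exact key.trans key2

lemma monomial_isLittleO {r a b : ℕ} (h : r + 1 ≤ a + b) :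
    (fun x : Cn 2 => x 0 ^ a * x 1 ^ b) =o[𝓝 0] fun x : Cn 2 => ‖x‖ ^ r :=
  (monomial_isBigO h).trans_isLittleO (normpow_isLittleO r)

/-- evaluation of a polynomial whose monomials all have degree `≥ m` is `O(‖x‖^m)` -/
lemma eval_isBigO {p : MvPolynomial (Fin 2) ℂ} {m : ℕ}
    (h : ∀ d : Fin 2 →₀ ℕ, MvPolynomial.coeff d p ≠ 0 → m ≤ deg d) :
    (fun x : Cn 2 => MvPolynomial.eval x p) =O[𝓝 0] fun x : Cn 2 => ‖x‖ ^ m := by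
  have : ∀ x : Cn 2, MvPolynomial.eval x p
      = ∑ d ∈ p.support, MvPolynomial.coeff d p * (x 0 ^ d 0 * x 1 ^ d 1) := by
    intro x
    rw [MvPolynomial.eval_eq']
    congr 1; ext d
    rw [Fin.prod_univ_two]
  simp only [this]
  apply IsBigO.fun_sum
  intro d hd
  have hc := MvPolynomial.mem_support_iff.mp hd
  exact (monomial_isBigO (h d hc)).const_mul_left _

/-- evaluation of a polynomial whose low-degree (`≤ r`) coefficients vanish is `o(‖x‖^r)` -/
lemma eval_isLittleO {p : MvPolynomial (Fin 2) ℂ} {r : ℕ}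
    (h : ∀ d : Fin 2 →₀ ℕ, deg d ≤ r → MvPolynomial.coeff d p = 0) :
    (fun x : Cn 2 => MvPolynomial.eval x p) =o[𝓝 0] fun x : Cn 2 => ‖x‖ ^ r := by
  have : ∀ x : Cn 2, MvPolynomial.eval x p
      = ∑ d ∈ p.support, MvPolynomial.coeff d p * (x 0 ^ d 0 * x 1 ^ d 1) := by
    intro x
    rw [MvPolynomial.eval_eq']
    congr 1; ext d
    rw [Fin.prod_univ_two]
  simp only [this]
  apply IsLittleO.fun_sum
  intro d hd
  have hc := MvPolynomial.mem_support_iff.mp hd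
  have hdeg : r + 1 ≤ deg d := by
    by_contra hcon
    exact hc (h d (by omega))
  have : r + 1 ≤ d 0 + d 1 := by simpa [deg] using hdeg
  exact (monomial_isLittleO this).const_mul_left _

/-- boundedness near `0` -/
def Bd (f : Cn 2 → ℂ) : Prop := f =O[𝓝 (0 : Cn 2)] fun _ : Cn 2 => (1 : ℝ)

lemma Bd.mul {f g : Cn 2 → ℂ} (hf : Bd f) (hg : Bd g) : Bd (fun x => f x * g x) := by
  unfold Bd at *
  have := IsBigO.mul hf hg
  simpa only [one_mul] using this

lemma Bd.pow {f : Cn 2 → ℂ} (hf : Bd f) (n : ℕ) : Bd (fun x => f x ^ n) := by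
  unfold Bd at *
  have := IsBigO.pow hf n
  simpa only [one_pow] using this

lemma Bd.of_tendsto {f : Cn 2 → ℂ} {c : ℂ} (hf : Tendsto f (𝓝 0) (𝓝 c)) : Bd f :=
  hf.isBigO_one ℝ

lemma Bd.add {f g : Cn 2 → ℂ} (hf : Bd f) (hg : Bd g) : Bd (fun x => f x + g x) := by
  exact IsBigO.add hf hg

lemma bd_of_isBigO_norm {f : Cn 2 → ℂ} {m : ℕ}
    (h : f =O[𝓝 0] fun x : Cn 2 => ‖x‖ ^ m) : Bd f := by
  have h2 : (fun x : Cn 2 => ‖x‖ ^ m) =O[𝓝 0] fun x : Cn 2 => ‖x‖ ^ 0 := normpow_isBigO (Nat.zero_le m)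
  have := h.trans h2
  unfold Bd
  simpa using this

/-- small: `o(‖x‖^r)` near `0` -/
def Sm (r : ℕ) (f : Cn 2 → ℂ) : Prop := f =o[𝓝 (0 : Cn 2)] fun x : Cn 2 => ‖x‖ ^ r

lemma Sm.add {r : ℕ} {f g : Cn 2 → ℂ} (hf : Sm r f) (hg : Sm r g) : Sm r (fun x => f x + g x) :=
  IsLittleO.add hf hg

lemma Sm.sub {r : ℕ} {f g : Cn 2 → ℂ} (hf : Sm r f) (hg : Sm r g) : Sm r (fun x => f x - g x) :=
  IsLittleO.sub hf hg

lemma Sm.const_mul {r : ℕ} {f : Cn 2 → ℂ} (hf : Sm r f) (c : ℂ) : Sm r (fun x => c * f x) :=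
  hf.const_mul_left c

lemma Bd.mul_sm {r : ℕ} {f g : Cn 2 → ℂ} (hf : Bd f) (hg : Sm r g) :
    Sm r (fun x => f x * g x) := by
  have := hf.mul_isLittleO hg
  unfold Sm
  simpa using this

lemma Sm.mul_bd {r : ℕ} {f g : Cn 2 → ℂ} (hf : Sm r f) (hg : Bd g) :
    Sm r (fun x => f x * g x) := by
  have := hg.mul_sm hf
  simpa [mul_comm] using this

lemma Sm.bd {r : ℕ} {f : Cn 2 → ℂ} (hf : Sm r f) : Bd f :=
  bd_of_isBigO_norm hf.isBigO

lemma Sm.pow_sub {r : ℕ} {u v : Cn 2 → ℂ} (hu : Bd u) (hv : Bd v)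
    (h : Sm r (fun x => u x - v x)) (n : ℕ) :
    Sm r (fun x => u x ^ n - v x ^ n) := by
  induction n with
  | zero => unfold Sm; simpa using isLittleO_zero _ _
  | succ n ih =>
    have key : ∀ x : Cn 2, u x ^ (n+1) - v x ^ (n+1)
        = u x ^ n * (u x - v x) + (u x ^ n - v x ^ n) * v x := by
      intro x; ring
    simp only [key]
    exact ((hu.pow n).mul_sm h).add (ih.mul_bd hv)


/-! ### Polynomial construction from resonant coefficients -/

lemma χ_mon (l₁ l₂ : ℂ) (a b : ℕ) : χ l₁ l₂ (mon a b) = l₁ ^ a * l₂ ^ b := by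
  simp [χ, mon_apply0, mon_apply1]

lemma ee_eq_iff {i j : Fin 2} : ee i = ee j ↔ i = j :=
  ⟨ee_inj, fun h => by rw [h]⟩

lemma ee_ne_zero (j : Fin 2) : ee j ≠ 0 := by
  intro h
  have := deg_ee j
  rw [h] at this
  simp [deg] at this

lemma eval_bind₁' (f : Fin 2 → MvPolynomial (Fin 2) ℂ) (φ : MvPolynomial (Fin 2) ℂ)
    (x : Cn 2) :
    MvPolynomial.eval x (MvPolynomial.bind₁ f φ)
      = MvPolynomial.eval (fun i => MvPolynomial.eval x (f i)) φ := by
  rw [MvPolynomial.eval, MvPolynomial.eval₂Hom_bind₁]; rfl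

lemma eval_mon (x : Cn 2) (a b : ℕ) (cc : ℂ) :
    MvPolynomial.eval x (MvPolynomial.monomial (mon a b) cc) = cc * x 0 ^ a * x 1 ^ b := by
  rw [MvPolynomial.eval_monomial, Finsupp.prod_fintype _ _ (fun i => pow_zero (x i)),
    Fin.prod_univ_two, mon_apply0, mon_apply1, mul_assoc]

lemma eval_ee (x : Cn 2) (j : Fin 2) (cc : ℂ) :
    MvPolynomial.eval x (MvPolynomial.monomial (ee j) cc) = cc * x j := by
  fin_cases j
  · show MvPolynomial.eval x (MvPolynomial.monomial (ee 0) cc) = cc * x 0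
    rw [ee_zero, eval_mon]; ring
  · show MvPolynomial.eval x (MvPolynomial.monomial (ee 1) cc) = cc * x 1
    rw [ee_one, eval_mon]; ring

/-- the polynomial built from a coefficient array, degrees `2..r` -/
def polyC (r : ℕ) (c : ℕ → ℕ → ℂ) : MvPolynomial (Fin 2) ℂ :=
  ∑ i ∈ Finset.range (r+1) ×ˢ Finset.range (r+1),
    if 2 ≤ i.1 + i.2 ∧ i.1 + i.2 ≤ r then
      MvPolynomial.monomial (mon i.1 i.2) (c i.1 i.2) else 0

/-- linear term plus resonant part -/
def poly (r : ℕ) (lin : ℂ) (j : Fin 2) (c : ℕ → ℕ → ℂ) : MvPolynomial (Fin 2) ℂ :=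
  MvPolynomial.monomial (ee j) lin + polyC r c

lemma eval_polyC (r : ℕ) (c : ℕ → ℕ → ℂ) (x : Cn 2) :
    MvPolynomial.eval x (polyC r c)
      = ∑ i ∈ Finset.range (r+1) ×ˢ Finset.range (r+1),
          (if 2 ≤ i.1 + i.2 ∧ i.1 + i.2 ≤ r then c i.1 i.2 * x 0 ^ i.1 * x 1 ^ i.2
            else 0) := by
  unfold polyC
  rw [map_sum]
  apply Finset.sum_congr rfl
  intro i _
  by_cases h : 2 ≤ i.1 + i.2 ∧ i.1 + i.2 ≤ r
  · rw [if_pos h, if_pos h, eval_mon]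
  · rw [if_neg h, if_neg h, map_zero]

lemma eval_poly (r : ℕ) (lin : ℂ) (j : Fin 2) (c : ℕ → ℕ → ℂ) (x : Cn 2) :
    MvPolynomial.eval x (poly r lin j c)
      = lin * x j + ∑ i ∈ Finset.range (r+1) ×ˢ Finset.range (r+1),
          (if 2 ≤ i.1 + i.2 ∧ i.1 + i.2 ≤ r then c i.1 i.2 * x 0 ^ i.1 * x 1 ^ i.2
            else 0) := by
  unfold poly
  rw [map_add, eval_polyC, eval_ee]

lemma good_polyC {l₁ l₂ t : ℂ} {r : ℕ} {c : ℕ → ℕ → ℂ}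
    (hres : ∀ i₁ i₂ : ℕ, 2 ≤ i₁ + i₂ → i₁ + i₂ ≤ r → c i₁ i₂ ≠ 0 →
      t = l₁ ^ i₁ * l₂ ^ i₂) :
    Good l₁ l₂ t 2 (polyC r c) := by
  apply Good.sum
  intro i _
  by_cases h : 2 ≤ i.1 + i.2 ∧ i.1 + i.2 ≤ r
  · rw [if_pos h]
    by_cases hc : c i.1 i.2 = 0
    · rw [hc, map_zero]
      exact Good.zero _ _ _ _
    · apply Good.monomial
      · rw [χ_mon]
        exact hres i.1 i.2 h.1 h.2 hc
      · rw [deg_mon]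
        exact h.1
  · rw [if_neg h]
    exact Good.zero _ _ _ _

lemma coeff_polyC_ne {r : ℕ} {c : ℕ → ℕ → ℂ} {d : Fin 2 →₀ ℕ}
    (h0 : MvPolynomial.coeff d (polyC r c) ≠ 0) : 2 ≤ deg d ∧ deg d ≤ r := by
  unfold polyC at h0
  rw [MvPolynomial.coeff_sum] at h0
  obtain ⟨i, _, hne⟩ := Finset.exists_ne_zero_of_sum_ne_zero h0
  by_cases hcond : 2 ≤ i.1 + i.2 ∧ i.1 + i.2 ≤ r
  · rw [if_pos hcond, MvPolynomial.coeff_monomial] at hne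
    by_cases hm : mon i.1 i.2 = d
    · rw [← hm, deg_mon]
      exact hcond
    · simp [hm] at hne
  · simp [hcond] at hne

lemma coeff_polyC_low {r : ℕ} {c : ℕ → ℕ → ℂ} {d : Fin 2 →₀ ℕ} (h : deg d ≤ 1) :
    MvPolynomial.coeff d (polyC r c) = 0 := by
  by_contra h0
  have := (coeff_polyC_ne h0).1
  omega

lemma coeff_polyC_mid (r : ℕ) (c : ℕ → ℕ → ℂ) {d : Fin 2 →₀ ℕ}
    (h2 : 2 ≤ deg d) (hr : deg d ≤ r) :
    MvPolynomial.coeff d (polyC r c) = c (d 0) (d 1) := by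
  unfold polyC
  rw [MvPolynomial.coeff_sum]
  have hd0 : d 0 ∈ Finset.range (r+1) := by
    rw [Finset.mem_range]
    have : d 0 ≤ deg d := Nat.le_add_right _ _
    omega
  have hd1 : d 1 ∈ Finset.range (r+1) := by
    rw [Finset.mem_range]
    have : d 1 ≤ deg d := Nat.le_add_left _ _
    omega
  rw [Finset.sum_eq_single_of_mem (d 0, d 1) (Finset.mem_product.mpr ⟨hd0, hd1⟩)]
  · have hcond : 2 ≤ d 0 + d 1 ∧ d 0 + d 1 ≤ r := by
      constructor
      · exact h2
      · exact hr
    rw [if_pos hcond, MvPolynomial.coeff_monomial, if_pos (mon_eq_self d)]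
  · intro b _ hne
    by_cases hcond : 2 ≤ b.1 + b.2 ∧ b.1 + b.2 ≤ r
    · rw [if_pos hcond, MvPolynomial.coeff_monomial, if_neg]
      intro hmon
      apply hne
      have := mon_inj (hmon.trans (mon_eq_self d).symm)
      exact Prod.ext this.1 this.2
    · rw [if_neg hcond]
      exact MvPolynomial.coeff_zero d

/-! ### The polynomial normal-form predicate -/

/-- `h` agrees with a `t`-resonant polynomial with linear part `lin • x_j`
up to `o(‖x‖^r)`. -/
def PolyForm (r : ℕ) (l₁ l₂ t lin : ℂ) (j : Fin 2) (h : Cn 2 → ℂ) : Prop :=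
  ∃ p : MvPolynomial (Fin 2) ℂ,
    Good l₁ l₂ t 1 p ∧
    (∀ i : Fin 2, MvPolynomial.coeff (ee i) p = if i = j then lin else 0) ∧
    Sm r (fun x => h x - MvPolynomial.eval x p)

/-! ### Equivalence with `ResonantUpTo` -/

lemma PolyForm.of_resonant {r : ℕ} {l₁ l₂ t lin : ℂ} {j : Fin 2} {h : Cn 2 → ℂ}
    (ht : t = χ l₁ l₂ (ee j)) (hres : ResonantUpTo l₁ l₂ t lin j h r) :
    PolyForm r l₁ l₂ t lin j h := by
  obtain ⟨c, hc, ho⟩ := hres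
  refine ⟨poly r lin j c, ?_, ?_, ?_⟩
  · unfold poly
    exact (Good.monomial _ _ ht (by rw [deg_ee])).add ((good_polyC hc).mono one_le_two)
  · intro i
    unfold poly
    rw [MvPolynomial.coeff_add, MvPolynomial.coeff_monomial,
      coeff_polyC_low (by rw [deg_ee]), add_zero]
    by_cases hij : i = j
    · rw [if_pos hij, if_pos (by rw [hij])]
    · rw [if_neg hij, if_neg (fun hee => hij (ee_inj hee).symm)]
  · have : ∀ x : Cn 2, h x - MvPolynomial.eval x (poly r lin j c)
        = h x - lin * x j - ∑ i ∈ Finset.range (r + 1) ×ˢ Finset.range (r + 1),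
            (if 2 ≤ i.1 + i.2 ∧ i.1 + i.2 ≤ r then c i.1 i.2 * x 0 ^ i.1 * x 1 ^ i.2
              else 0) := by
      intro x
      rw [eval_poly]
      ring
    unfold Sm
    simp only [this]
    exact ho

lemma PolyForm.to_resonant {r : ℕ} {l₁ l₂ t lin : ℂ} {j : Fin 2} {h : Cn 2 → ℂ}
    (hpf : PolyForm r l₁ l₂ t lin j h) :
    ResonantUpTo l₁ l₂ t lin j h r := by
  obtain ⟨p, hg, hcf, ho⟩ := hpf
  refine ⟨fun a b => MvPolynomial.coeff (mon a b) p, ?_, ?_⟩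
  · intro i₁ i₂ h2 hlr hc
    rw [(hg _ hc).1, χ_mon]
  · set c : ℕ → ℕ → ℂ := fun a b => MvPolynomial.coeff (mon a b) p with hcdef
    have hD : ∀ d : Fin 2 →₀ ℕ, deg d ≤ r →
        MvPolynomial.coeff d (p - poly r lin j c) = 0 := by
      intro d hdr
      rw [MvPolynomial.coeff_sub]
      unfold poly
      rw [MvPolynomial.coeff_add, MvPolynomial.coeff_monomial]
      rcases Nat.lt_or_ge (deg d) 2 with hlow | hhigh
      · -- degree 0 or 1
        rcases Nat.lt_or_ge (deg d) 1 with h0 | h1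
        · -- degree 0
          have hd0 : d = 0 := deg_eq_zero (by omega)
          subst hd0
          have hp0 : MvPolynomial.coeff 0 p = 0 := by
            by_contra hne
            have := (hg _ hne).2
            simp [deg] at this
          rw [hp0, coeff_polyC_low (by simp [deg]), if_neg (ee_ne_zero j), add_zero,
            sub_zero]
        · -- degree 1
          have hd1 : deg d = 1 := by omega
          rw [coeff_polyC_low (by omega), add_zero]
          rcases deg_eq_one hd1 with hd | hd <;> subst hd
          · rw [hcf 0]
            by_cases hj : (0 : Fin 2) = j
            · rw [if_pos hj, if_pos (by rw [hj]), sub_self]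
            · rw [if_neg hj, if_neg (fun hee => hj (ee_inj hee).symm), sub_zero]
          · rw [hcf 1]
            by_cases hj : (1 : Fin 2) = j
            · rw [if_pos hj, if_pos (by rw [hj]), sub_self]
            · rw [if_neg hj, if_neg (fun hee => hj (ee_inj hee).symm), sub_zero]
      · -- degree 2..r
        rw [coeff_polyC_mid r c hhigh hdr, if_neg, zero_add]
        · show MvPolynomial.coeff d p - MvPolynomial.coeff (mon (d 0) (d 1)) p = 0
          rw [mon_eq_self d, sub_self]
        · intro hee
          have : deg d = 1 := by rw [← hee, deg_ee]
          omega
    have hsm : Sm r (fun x => MvPolynomial.eval x (p - poly r lin j c)) :=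
      eval_isLittleO hD
    have key : ∀ x : Cn 2,
        h x - lin * x j - ∑ i ∈ Finset.range (r + 1) ×ˢ Finset.range (r + 1),
            (if 2 ≤ i.1 + i.2 ∧ i.1 + i.2 ≤ r then c i.1 i.2 * x 0 ^ i.1 * x 1 ^ i.2
              else 0)
        = (h x - MvPolynomial.eval x p) + MvPolynomial.eval x (p - poly r lin j c) := by
      intro x
      rw [map_sub, eval_poly]
      ring
    have := ho.add hsm
    unfold Sm at this
    simp only [← key] at this
    exact this

/-! ### Composition -/

lemma Sm.isBigO_norm1 {r : ℕ} (hr : 0 < r) {f : Cn 2 → ℂ} (h : Sm r f) :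
    f =O[𝓝 (0 : Cn 2)] fun x : Cn 2 => ‖x‖ ^ 1 :=
  h.isBigO.trans (normpow_isBigO hr)

lemma eval_diff_small {r : ℕ} (q : MvPolynomial (Fin 2) ℂ) {v w : Cn 2 → Cn 2}
    (hbv : ∀ i, Bd (fun x => v x i)) (hbw : ∀ i, Bd (fun x => w x i))
    (hs : ∀ i, Sm r (fun x => v x i - w x i)) :
    Sm r (fun x => MvPolynomial.eval (v x) q - MvPolynomial.eval (w x) q) := by
  have hev : ∀ y : Cn 2, MvPolynomial.eval y q
      = ∑ d ∈ q.support, MvPolynomial.coeff d q * (y 0 ^ d 0 * y 1 ^ d 1) := by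
    intro y
    rw [MvPolynomial.eval_eq']
    congr 1; ext d
    rw [Fin.prod_univ_two]
  have key : ∀ x : Cn 2, MvPolynomial.eval (v x) q - MvPolynomial.eval (w x) q
      = ∑ d ∈ q.support, MvPolynomial.coeff d q *
          ((v x 0 ^ d 0 - w x 0 ^ d 0) * v x 1 ^ d 1
            + w x 0 ^ d 0 * (v x 1 ^ d 1 - w x 1 ^ d 1)) := by
    intro x
    rw [hev, hev, ← Finset.sum_sub_distrib]
    apply Finset.sum_congr rfl
    intro d _
    ring
  unfold Sm
  simp only [key]
  apply IsLittleO.fun_sum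
  intro d _
  apply Sm.const_mul
  exact ((Sm.pow_sub (hbv 0) (hbw 0) (hs 0) (d 0)).mul_bd ((hbv 1).pow (d 1))).add
    (((hbw 0).pow (d 0)).mul_sm (Sm.pow_sub (hbv 1) (hbw 1) (hs 1) (d 1)))

lemma PolyForm.comp {r : ℕ} (hr : 0 < r) {l₁ l₂ l lin₀ lin₁ : ℂ} {j : Fin 2}
    {g u : Cn 2 → Cn 2}
    (ht : l = χ l₁ l₂ (ee j))
    (hq : PolyForm r l₁ l₂ l l j (fun x => g x j))
    (h0 : PolyForm r l₁ l₂ l₁ lin₀ 0 (fun x => u x 0))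
    (h1 : PolyForm r l₁ l₂ l₂ lin₁ 1 (fun x => u x 1)) :
    PolyForm r l₁ l₂ l (l * (![lin₀, lin₁] j)) j (fun x => g (u x) j) := by
  obtain ⟨q, hqg, hqc, hqo⟩ := hq
  obtain ⟨p₀, hp0g, hp0c, hp0o⟩ := h0
  obtain ⟨p₁, hp1g, hp1c, hp1o⟩ := h1
  set P : Fin 2 → MvPolynomial (Fin 2) ℂ := ![p₀, p₁] with hP
  have hP0 : P 0 = p₀ := rfl
  have hP1 : P 1 = p₁ := rfl
  -- the residual part of q
  set q' : MvPolynomial (Fin 2) ℂ := q - MvPolynomial.monomial (ee j) l with hq'def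
  have hq' : Good l₁ l₂ l 2 q' := by
    intro d hd
    have hdeg2 : 2 ≤ deg d := by
      by_contra hlt
      push_neg at hlt
      apply hd
      rw [hq'def, MvPolynomial.coeff_sub, MvPolynomial.coeff_monomial]
      rcases Nat.lt_or_ge (deg d) 1 with hz | ho1
      · have hd0 : d = 0 := deg_eq_zero (by omega)
        subst hd0
        have hp0' : MvPolynomial.coeff 0 q = 0 := by
          by_contra hne
          have := (hqg _ hne).2
          simp [deg] at this
        rw [hp0', if_neg (ee_ne_zero j), sub_zero]
      · have hd1 : deg d = 1 := by omega
        rcases deg_eq_one hd1 with hdd | hdd <;> subst hdd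
        · rw [hqc 0]
          by_cases hj : (0 : Fin 2) = j
          · rw [if_pos hj, if_pos (by rw [hj]), sub_self]
          · rw [if_neg hj, if_neg (fun hee => hj (ee_inj hee).symm), sub_zero]
        · rw [hqc 1]
          by_cases hj : (1 : Fin 2) = j
          · rw [if_pos hj, if_pos (by rw [hj]), sub_self]
          · rw [if_neg hj, if_neg (fun hee => hj (ee_inj hee).symm), sub_zero]
    refine ⟨?_, hdeg2⟩
    have hjne : ee j ≠ d := by
      intro hh
      rw [← hh, deg_ee] at hdeg2
      omega
    rw [hq'def, MvPolynomial.coeff_sub, MvPolynomial.coeff_monomial, if_neg hjne,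
      sub_zero] at hd
    exact (hqg d hd).1
  have hsplit : MvPolynomial.bind₁ P q
      = MvPolynomial.C l * P j + MvPolynomial.bind₁ P q' := by
    conv_lhs => rw [show q = MvPolynomial.monomial (ee j) l + q' by rw [hq'def]; ring]
    rw [map_add, MvPolynomial.bind₁_monomial]
    congr 2
    unfold ee
    rw [Finsupp.support_single_ne_zero j one_ne_zero, Finset.prod_singleton,
      Finsupp.single_eq_same, pow_one]
  have hbindg : Good l₁ l₂ l 2 (MvPolynomial.bind₁ P q') := hq'.bind₁ hp0g hp1g
  have hPjg : Good l₁ l₂ l 1 (MvPolynomial.C l * P j) := by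
    have hPg' : ∀ jj : Fin 2, Good l₁ l₂ (χ l₁ l₂ (ee jj)) 1 (P jj) := by
      rw [Fin.forall_fin_two]
      constructor
      · rw [χ_ee_zero]; rw [hP0]; exact hp0g
      · rw [χ_ee_one]; rw [hP1]; exact hp1g
    have hPg : Good l₁ l₂ (χ l₁ l₂ (ee j)) 1 (P j) := hPg' j
    intro d hd
    rw [MvPolynomial.coeff_C_mul] at hd
    have hl : l ≠ 0 := fun h => hd (by rw [h, zero_mul])
    have hpd : MvPolynomial.coeff d (P j) ≠ 0 := fun h => hd (by rw [h, mul_zero])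
    exact ⟨by rw [ht, (hPg d hpd).1], (hPg d hpd).2⟩
  refine ⟨MvPolynomial.bind₁ P q, ?_, ?_, ?_⟩
  · exact hqg.bind₁ hp0g hp1g
  · intro i
    rw [hsplit, MvPolynomial.coeff_add, MvPolynomial.coeff_C_mul]
    have hbz : MvPolynomial.coeff (ee i) (MvPolynomial.bind₁ P q') = 0 := by
      by_contra hne
      have := (hbindg _ hne).2
      rw [deg_ee] at this
      omega
    rw [hbz, add_zero]
    have hPc' : ∀ jj : Fin 2, ∀ i : Fin 2,
        MvPolynomial.coeff (ee i) (P jj) = if i = jj then ![lin₀, lin₁] jj else 0 := by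
      rw [Fin.forall_fin_two]
      constructor
      · intro i; rw [hP0]; simpa using hp0c i
      · intro i; rw [hP1]; simpa using hp1c i
    have hPc : MvPolynomial.coeff (ee i) (P j) = if i = j then ![lin₀, lin₁] j else 0 :=
      hPc' j i
    rw [hPc]
    by_cases hij : i = j
    · rw [if_pos hij, if_pos hij]
    · rw [if_neg hij, if_neg hij, mul_zero]
  · -- asymptotic part
    -- component facts
    have hEi : ∀ i : Fin 2, Sm r (fun x => u x i - MvPolynomial.eval x (P i)) := by
      rw [Fin.forall_fin_two]
      constructor
      · rw [hP0]; exact hp0o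
      · rw [hP1]; exact hp1o
    have hPbig : ∀ i : Fin 2,
        (fun x : Cn 2 => MvPolynomial.eval x (P i)) =O[𝓝 0] fun x : Cn 2 => ‖x‖ ^ 1 := by
      rw [Fin.forall_fin_two]
      constructor
      · rw [hP0]; exact eval_isBigO (fun d hd => (hp0g d hd).2)
      · rw [hP1]; exact eval_isBigO (fun d hd => (hp1g d hd).2)
    have hubig : ∀ i : Fin 2,
        (fun x : Cn 2 => u x i) =O[𝓝 0] fun x : Cn 2 => ‖x‖ ^ 1 := by
      intro i
      have : (fun x : Cn 2 => u x i)
          = fun x => (u x i - MvPolynomial.eval x (P i)) + MvPolynomial.eval x (P i) := by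
        ext x; ring
      rw [this]
      exact (Sm.isBigO_norm1 hr (hEi i)).add (hPbig i)
    have hu_tendsto : Tendsto u (𝓝 0) (𝓝 (0 : Cn 2)) := by
      rw [tendsto_pi_nhds]
      intro i
      have hz : Tendsto (fun x : Cn 2 => ‖x‖ ^ 1) (𝓝 0) (𝓝 0) := by
        simpa [pow_one] using tendsto_norm_zero
      exact (hubig i).trans_tendsto hz
    have hu_norm : (fun x : Cn 2 => ‖u x‖) =O[𝓝 0] fun x : Cn 2 => ‖x‖ ^ 1 := by
      have hsum : (fun x : Cn 2 => ‖u x 0‖ + ‖u x 1‖) =O[𝓝 0] fun x : Cn 2 => ‖x‖ ^ 1 :=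
        (hubig 0).norm_left.add (hubig 1).norm_left
      refine IsBigO.trans ?_ hsum
      apply IsBigO.of_bound 1
      filter_upwards with x
      have hnn : (0:ℝ) ≤ ‖u x 0‖ + ‖u x 1‖ := by positivity
      rw [Real.norm_of_nonneg (norm_nonneg _), Real.norm_of_nonneg hnn, one_mul]
      rw [pi_norm_le_iff_of_nonneg hnn]
      intro i
      fin_cases i
      · exact le_add_of_nonneg_right (norm_nonneg _)
      · exact le_add_of_nonneg_left (norm_nonneg _)
    have hdecomp : ∀ x : Cn 2, g (u x) j - MvPolynomial.eval x (MvPolynomial.bind₁ P q)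
        = (g (u x) j - MvPolynomial.eval (u x) q)
          + (MvPolynomial.eval (u x) q
            - MvPolynomial.eval (fun i => MvPolynomial.eval x (P i)) q) := by
      intro x
      rw [eval_bind₁']
      ring
    unfold Sm
    simp only [hdecomp]
    apply IsLittleO.add
    · -- remainder composed with u
      have hcomp := hqo.comp_tendsto hu_tendsto
      have htrans : ((fun y : Cn 2 => ‖y‖ ^ r) ∘ u) =O[𝓝 (0 : Cn 2)]
          fun x : Cn 2 => ‖x‖ ^ r := by
        have := hu_norm.pow r
        simp only [← pow_mul, one_mul] at this
        have heq : ((fun y : Cn 2 => ‖y‖ ^ r) ∘ u) = fun x => ‖u x‖ ^ r := rfl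
        rw [heq]
        exact this
      exact hcomp.trans_isBigO htrans
    · -- polynomial difference
      exact eval_diff_small q
        (fun i => bd_of_isBigO_norm (hubig i))
        (fun i => bd_of_isBigO_norm (hPbig i))
        hEi

/-! ### Iterates -/

lemma iterate_polyform {r : ℕ} (hr : 0 < r) {l₁ l₂ : ℂ} {g : Cn 2 → Cn 2}
    (hg0 : PolyForm r l₁ l₂ l₁ l₁ 0 (fun x => g x 0))
    (hg1 : PolyForm r l₁ l₂ l₂ l₂ 1 (fun x => g x 1)) :
    ∀ k : ℕ, PolyForm r l₁ l₂ l₁ (l₁ ^ k) 0 (fun x => g^[k] x 0)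
      ∧ PolyForm r l₁ l₂ l₂ (l₂ ^ k) 1 (fun x => g^[k] x 1) := by
  intro k
  induction k with
  | zero =>
    constructor
    · refine ⟨MvPolynomial.monomial (ee 0) 1, ?_, ?_, ?_⟩
      · exact Good.monomial _ _ (χ_ee_zero l₁ l₂).symm (by rw [deg_ee])
      · intro i
        rw [MvPolynomial.coeff_monomial, pow_zero]
        by_cases hi : i = 0
        · rw [if_pos hi, if_pos (by rw [hi])]
        · rw [if_neg hi, if_neg (fun hee => hi (ee_inj hee).symm)]
      · have : (fun x : Cn 2 => g^[0] x 0 -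
            MvPolynomial.eval x (MvPolynomial.monomial (ee 0) 1)) = fun _ => 0 := by
          ext x
          rw [Function.iterate_zero_apply, eval_ee, one_mul, sub_self]
        unfold Sm
        show (fun x : Cn 2 => g^[0] x 0 -
            MvPolynomial.eval x (MvPolynomial.monomial (ee 0) 1)) =o[𝓝 (0 : Cn 2)]
          fun x : Cn 2 => ‖x‖ ^ r
        rw [this]
        exact isLittleO_zero _ _
    · refine ⟨MvPolynomial.monomial (ee 1) 1, ?_, ?_, ?_⟩
      · exact Good.monomial _ _ (χ_ee_one l₁ l₂).symm (by rw [deg_ee])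
      · intro i
        rw [MvPolynomial.coeff_monomial, pow_zero]
        by_cases hi : i = 1
        · rw [if_pos hi, if_pos (by rw [hi])]
        · rw [if_neg hi, if_neg (fun hee => hi (ee_inj hee).symm)]
      · have : (fun x : Cn 2 => g^[0] x 1 -
            MvPolynomial.eval x (MvPolynomial.monomial (ee 1) 1)) = fun _ => 0 := by
          ext x
          rw [Function.iterate_zero_apply, eval_ee, one_mul, sub_self]
        unfold Sm
        show (fun x : Cn 2 => g^[0] x 1 -
            MvPolynomial.eval x (MvPolynomial.monomial (ee 1) 1)) =o[𝓝 (0 : Cn 2)]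
          fun x : Cn 2 => ‖x‖ ^ r
        rw [this]
        exact isLittleO_zero _ _
  | succ k ih =>
    obtain ⟨ih0, ih1⟩ := ih
    have hit : ∀ x : Cn 2, g^[k+1] x = g (g^[k] x) := fun x =>
      Function.iterate_succ_apply' g k x
    constructor
    · have := PolyForm.comp hr (χ_ee_zero l₁ l₂).symm hg0 ih0 ih1
      have heq : (fun x : Cn 2 => g (g^[k] x) 0) = fun x : Cn 2 => g^[k+1] x 0 := by
        ext x
        rw [hit]
      rw [heq] at this
      have hlin : l₁ * (![l₁ ^ k, l₂ ^ k] (0 : Fin 2)) = l₁ ^ (k+1) := by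
        simp [pow_succ]
        ring
      rwa [hlin] at this
    · have := PolyForm.comp hr (χ_ee_one l₁ l₂).symm hg1 ih0 ih1
      have heq : (fun x : Cn 2 => g (g^[k] x) 1) = fun x : Cn 2 => g^[k+1] x 1 := by
        ext x
        rw [hit]
      rw [heq] at this
      have hlin : l₂ * (![l₁ ^ k, l₂ ^ k] (1 : Fin 2)) = l₂ ^ (k+1) := by
        simp [pow_succ]
        ring
      rwa [hlin] at this
/-- If `g` with `Dg(0) = diag(λ₁, λ₂)` is in resonant normal form up to degree `r`
in each component, then so is every iterate `g^k`, whose linear part is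
`diag(λ₁^k, λ₂^k)` and whose coefficients up to degree `r` obey the same resonance
conditions `λ_j = λ₁^{i₁} λ₂^{i₂}`. -/
theorem iterate_resonant_normal_form (r : ℕ) (hr : 0 < r) (l₁ l₂ : ℂ)
    (g : Cn 2 → Cn 2) (hg : IsGerm g)
    (hD : ∀ v : Cn 2, fderiv ℂ g 0 v = ![l₁ * v 0, l₂ * v 1])
    (h₁ : ResonantUpTo l₁ l₂ l₁ l₁ 0 (fun x => g x 0) r)
    (h₂ : ResonantUpTo l₁ l₂ l₂ l₂ 1 (fun x => g x 1) r) :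
    ∀ k : ℕ, 0 < k →
      ResonantUpTo l₁ l₂ l₁ (l₁ ^ k) 0 (fun x => g^[k] x 0) r ∧
      ResonantUpTo l₁ l₂ l₂ (l₂ ^ k) 1 (fun x => g^[k] x 1) r := by
  have hg0 : PolyForm r l₁ l₂ l₁ l₁ 0 (fun x => g x 0) :=
    PolyForm.of_resonant (χ_ee_zero l₁ l₂).symm h₁
  have hg1 : PolyForm r l₁ l₂ l₂ l₂ 1 (fun x => g x 1) :=
    PolyForm.of_resonant (χ_ee_one l₁ l₂).symm h₂
  intro k _
  obtain ⟨hk0, hk1⟩ := iterate_polyform hr hg0 hg1 k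
  exact ⟨hk0.to_resonant, hk1.to_resonant⟩

end ZhangPaper
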